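/- Let λ ∈ (0,1), R ∈ R_L with λ not a pole of R, and K ≥ 1. Let ν_{R,λ,K} be the self-affine measure on ℝ^K associated to the IFS {x ↦ Θ(λ,K)x + v_j(R,λ,K) : j = 1,…,m} with probability vector p, where Θ(λ,K) is the lower-triangular K×K matrix with λ on the diagonal and 1,2,…,K−1 on the subdiagonal, and v_j(R,λ,K) = (T_j(1,R(λ)), T_j(0,R'(λ)), …, T_j(0, R^{(K−1)}(λ)))^T. Then dim ν_{R,λ,K} ≤ h(R,λ,K)/log λ^{-1}, where h(R,λ,K) = lim_n H(B^{(n)}_{R,λ,K})/n is the entropy rate of the n-step random walk B^{(n)}_{R,λ,K} = (A_R^{(n)}(λ), …, d^{K−1}/dX^{K−1} A_R^{(n)}(λ)). -/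

import Mathlib

open Filter MeasureTheory
open scoped ENNReal
set_option maxHeartbeats 1000000
universe u

/-- Shannon entropy of a discrete probability measure. -/
noncomputable def pmfEntropy {α : Type*} (q : PMF α) : ℝ :=
  ∑' a, Real.negMulLog ((q a).toReal)

/-- The real-analytic function on `(-1,1)` defined by an integer power series. -/
noncomputable def seriesFun (P : PowerSeries ℤ) (x : ℝ) : ℝ :=
  ∑' n : ℕ, ((PowerSeries.coeff (R := ℤ) n P : ℤ) : ℝ) * x ^ n

/-- The lower triangular `K×K` matrix `Θ(λ,K)` with `λ` on the diagonal and
`1, 2, …, K-1` on the subdiagonal. -/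
noncomputable def Theta (lam : ℝ) (K : ℕ) : Matrix (Fin K) (Fin K) ℝ :=
  fun i j =>
    if (i : ℕ) = (j : ℕ) then lam
    else if (i : ℕ) = (j : ℕ) + 1 then ((i : ℕ) : ℝ) else 0

/-- Law of the `n`-step random walk `B^{(n)} = ψ_{ξ_0}(B̃^{(n-1)})` driven by i.i.d.
digits with law `ξ` and the maps `ψ_j`, started at `0`. -/
noncomputable def stepLaw {m K : ℕ} (ξ : PMF (Fin m))
    (ψ : Fin m → (Fin K → ℝ) → (Fin K → ℝ)) : ℕ → PMF (Fin K → ℝ)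
  | 0 => PMF.pure 0
  | n + 1 => ξ.bind fun j => (stepLaw ξ ψ n).map (ψ j)

section EntropyLemmas

variable {α β : Type*}

lemma pmf_ne_top (p : PMF α) (u : α) : p u ≠ ⊤ :=
  ne_top_of_le_ne_top ENNReal.one_ne_top (p.coe_le_one u)

lemma pmf_toReal_nonneg (p : PMF α) (u : α) : 0 ≤ (p u).toReal := ENNReal.toReal_nonneg

lemma pmf_toReal_le_one (p : PMF α) (u : α) : (p u).toReal ≤ 1 := by
  have := p.coe_le_one u
  simpa using ENNReal.toReal_mono ENNReal.one_ne_top this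

/-- finite support predicate -/
def PMFSupp (p : PMF α) (F : Finset α) : Prop := ∀ u, u ∉ F → p u = 0

lemma pmfSupp_sum_toReal {p : PMF α} {F : Finset α} (h : PMFSupp p F) :
    ∑ u ∈ F, (p u).toReal = 1 := by
  have h1 : ∑' u, p u = 1 := p.tsum_coe
  rw [tsum_eq_sum (fun b hb => h b hb)] at h1
  have := ENNReal.toReal_sum (s := F) (f := fun u => p u) (fun a _ => pmf_ne_top p a)
  rw [h1] at this
  simpa using this.symm

lemma pmfEntropy_eq {p : PMF α} {F : Finset α} (h : PMFSupp p F) :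
    pmfEntropy p = ∑ u ∈ F, Real.negMulLog ((p u).toReal) := by
  refine tsum_eq_sum (fun b hb => ?_)
  rw [h b hb]; simp [Real.negMulLog_zero]

lemma pmfEntropy_nonneg {p : PMF α} {F : Finset α} (h : PMFSupp p F) :
    0 ≤ pmfEntropy p := by
  rw [pmfEntropy_eq h]
  exact Finset.sum_nonneg fun u _ =>
    Real.negMulLog_nonneg (pmf_toReal_nonneg p u) (pmf_toReal_le_one p u)

/-- subadditivity of negMulLog on finite sums of nonnegatives -/
lemma negMulLog_sum_le {ι : Type*} (s : Finset ι) (f : ι → ℝ) (hf : ∀ i ∈ s, 0 ≤ f i) :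
    Real.negMulLog (∑ i ∈ s, f i) ≤ ∑ i ∈ s, Real.negMulLog (f i) := by
  have hT : ∀ i ∈ s, f i ≤ ∑ j ∈ s, f j := fun i hi =>
    Finset.single_le_sum hf hi
  unfold Real.negMulLog
  have e1 : (-∑ i ∈ s, f i) * Real.log (∑ i ∈ s, f i)
      = ∑ i ∈ s, (-f i * Real.log (∑ j ∈ s, f j)) := by
    rw [← Finset.sum_neg_distrib, Finset.sum_mul]
  rw [e1]
  refine Finset.sum_le_sum (fun i hi => ?_)
  rcases (hf i hi).eq_or_lt with h0 | h0
  · simp [← h0]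
  · rw [neg_mul, neg_mul, neg_le_neg_iff]
    exact mul_le_mul_of_nonneg_left
      (Real.log_le_log h0 (hT i hi)) h0.le

variable [DecidableEq β]

lemma pmfSupp_map {p : PMF α} {F : Finset α} (h : PMFSupp p F) (f : α → β) :
    PMFSupp (p.map f) (F.image f) := by
  intro u hu
  rw [PMF.map_apply]
  rw [ENNReal.tsum_eq_zero]
  intro t
  by_cases ht : u = f t
  · subst ht
    rw [if_pos rfl]
    by_contra hne
    exact hu (Finset.mem_image_of_mem f (by
      by_contra htF; exact hne (h t htF)))
  · rw [if_neg ht]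

lemma map_apply_toReal {p : PMF α} {F : Finset α} (h : PMFSupp p F) (f : α → β) (u : β) :
    ((p.map f) u).toReal = ∑ t ∈ F, (if u = f t then (p t).toReal else 0) := by
  rw [PMF.map_apply]
  rw [tsum_eq_sum (s := F) (fun t ht => by
    rw [h t ht]; simp)]
  rw [ENNReal.toReal_sum (fun t _ => by
    split
    · exact pmf_ne_top p t
    · simp)]
  refine Finset.sum_congr rfl (fun t _ => ?_)
  split <;> simp

lemma pmfEntropy_map_le {p : PMF α} {F : Finset α} (h : PMFSupp p F) (f : α → β) :
    pmfEntropy (p.map f) ≤ pmfEntropy p := by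
  rw [pmfEntropy_eq (pmfSupp_map h f), pmfEntropy_eq h]
  have step1 : ∀ u ∈ F.image f,
      Real.negMulLog (((p.map f) u).toReal)
        ≤ ∑ t ∈ F, (if u = f t then Real.negMulLog ((p t).toReal) else 0) := by
    intro u _
    rw [map_apply_toReal h f u]
    refine le_trans (negMulLog_sum_le F _ (fun t _ => by split; exacts [pmf_toReal_nonneg p t, le_rfl])) ?_
    refine le_of_eq (Finset.sum_congr rfl (fun t _ => ?_))
    split <;> simp [Real.negMulLog_zero]
  refine le_trans (Finset.sum_le_sum step1) ?_
  rw [Finset.sum_comm]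
  refine Finset.sum_le_sum (fun t ht => ?_)
  have : ∑ u ∈ F.image f, (if u = f t then Real.negMulLog ((p t).toReal) else 0)
      = Real.negMulLog ((p t).toReal) := by
    rw [Finset.sum_ite_eq']
    exact if_pos (Finset.mem_image_of_mem f ht)
  rw [this]

lemma pmfSupp_bind {p : PMF α} {F : Finset α} (h : PMFSupp p F)
    (g : α → PMF β) (Fg : α → Finset β) (hFg : ∀ t, PMFSupp (g t) (Fg t)) :
    PMFSupp (p.bind g) (F.biUnion Fg) := by
  intro u hu
  rw [PMF.bind_apply, ENNReal.tsum_eq_zero]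
  intro t
  by_cases htF : t ∈ F
  · have : u ∉ Fg t := fun hx => hu (Finset.mem_biUnion.mpr ⟨t, htF, hx⟩)
    rw [hFg t u this, mul_zero]
  · rw [h t htF, zero_mul]

lemma bind_apply_toReal {p : PMF α} {F : Finset α} (h : PMFSupp p F)
    (g : α → PMF β) (u : β) :
    ((p.bind g) u).toReal = ∑ t ∈ F, (p t).toReal * ((g t) u).toReal := by
  rw [PMF.bind_apply]
  rw [tsum_eq_sum (s := F) (fun t ht => by rw [h t ht, zero_mul])]
  rw [ENNReal.toReal_sum (fun t _ => ENNReal.mul_ne_top (pmf_ne_top p t) (pmf_ne_top (g t) u))]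
  exact Finset.sum_congr rfl (fun t _ => ENNReal.toReal_mul)

lemma pmfEntropy_bind_le {p : PMF α} {F : Finset α} (h : PMFSupp p F)
    (g : α → PMF β) (Fg : α → Finset β) (hFg : ∀ t, PMFSupp (g t) (Fg t))
    (B : ℝ) (hB0 : 0 ≤ B) (hB : ∀ t, pmfEntropy (g t) ≤ B) :
    pmfEntropy (p.bind g) ≤ pmfEntropy p + B := by
  classical
  set Fq := F.biUnion Fg with hFq
  have hsupp : PMFSupp (p.bind g) Fq := pmfSupp_bind h g Fg hFg
  rw [pmfEntropy_eq hsupp]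
  have step1 : ∀ u ∈ Fq,
      Real.negMulLog (((p.bind g) u).toReal)
        ≤ ∑ t ∈ F, Real.negMulLog ((p t).toReal * ((g t) u).toReal) := by
    intro u _
    rw [bind_apply_toReal h g u]
    exact negMulLog_sum_le F _ (fun t _ => by positivity)
  refine le_trans (Finset.sum_le_sum step1) ?_
  rw [Finset.sum_comm]
  have step2 : ∀ t ∈ F,
      ∑ u ∈ Fq, Real.negMulLog ((p t).toReal * ((g t) u).toReal)
        ≤ Real.negMulLog ((p t).toReal) + (p t).toReal * B := by
    intro t ht
    have hsuppt : PMFSupp (g t) Fq := by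
      intro u hu
      exact hFg t u (fun hx => hu (Finset.mem_biUnion.mpr ⟨t, ht, hx⟩))
    have e : ∀ u, Real.negMulLog ((p t).toReal * ((g t) u).toReal)
        = ((g t) u).toReal * Real.negMulLog ((p t).toReal)
          + (p t).toReal * Real.negMulLog (((g t) u).toReal) :=
      fun u => Real.negMulLog_mul _ _
    simp only [e]
    rw [Finset.sum_add_distrib, ← Finset.sum_mul, pmfSupp_sum_toReal hsuppt, one_mul,
      ← Finset.mul_sum, ← pmfEntropy_eq hsuppt]
    have := hB t
    nlinarith [pmf_toReal_nonneg p t]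
  refine le_trans (Finset.sum_le_sum step2) ?_
  rw [Finset.sum_add_distrib, ← pmfEntropy_eq h, ← Finset.sum_mul,
    pmfSupp_sum_toReal h, one_mul]
end EntropyLemmas


section StepLaw
variable {m K : ℕ} (ξ : PMF (Fin m)) (ψ : Fin m → (Fin K → ℝ) → (Fin K → ℝ))

lemma stepLaw_supp : ∀ n, ∃ F : Finset (Fin K → ℝ), PMFSupp (stepLaw ξ ψ n) F := by
  classical
  intro n
  induction n with
  | zero =>
    refine ⟨{0}, fun u hu => ?_⟩
    have : u ≠ 0 := by simpa using hu
    simp [stepLaw, PMF.pure_apply, this]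
  | succ n ih =>
    obtain ⟨F, hF⟩ := ih
    refine ⟨(Finset.univ ×ˢ F).image (fun jt => ψ jt.1 jt.2), fun u hu => ?_⟩
    show (ξ.bind fun j => (stepLaw ξ ψ n).map (ψ j)) u = 0
    rw [PMF.bind_apply, ENNReal.tsum_eq_zero]
    intro j
    have : (PMF.map (ψ j) (stepLaw ξ ψ n)) u = 0 := by
      rw [PMF.map_apply, ENNReal.tsum_eq_zero]
      intro t
      by_cases he : u = ψ j t
      · rw [if_pos he]
        by_cases htF : t ∈ F
        · exact absurd (Finset.mem_image.mpr ⟨(j, t), Finset.mem_product.mpr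
            ⟨Finset.mem_univ _, htF⟩, he.symm⟩) hu
        · exact hF t htF
      · rw [if_neg he]
    rw [this, mul_zero]

variable (A : Matrix (Fin K) (Fin K) ℝ) (c : Fin m → (Fin K → ℝ))
variable (hψA : ∀ j x, ψ j x = A.mulVec x + c j)

include hψA in
lemma stepLaw_decomp : ∀ a b : ℕ, stepLaw ξ ψ (a + b)
    = (stepLaw ξ ψ a).bind
        (fun u => (stepLaw ξ ψ b).map (fun y => (A ^ a).mulVec y + u)) := by
  intro a
  induction a with
  | zero =>
    intro b
    rw [Nat.zero_add]
    show stepLaw ξ ψ b = (PMF.pure 0).bind _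
    rw [PMF.pure_bind]
    have : (fun y => (A ^ 0).mulVec y + (0 : Fin K → ℝ)) = id := by
      funext y; simp [Matrix.one_mulVec]
    rw [this, PMF.map_id]
  | succ a ih =>
    intro b
    have hcomm : a + 1 + b = (a + b) + 1 := by omega
    rw [hcomm]
    show ξ.bind (fun j => (stepLaw ξ ψ (a + b)).map (ψ j)) = _
    have key : ∀ j, (stepLaw ξ ψ (a + b)).map (ψ j)
        = (stepLaw ξ ψ a).bind (fun u =>
            (stepLaw ξ ψ b).map (fun y => (A ^ (a+1)).mulVec y + ψ j u)) := by
      intro j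
      rw [ih b, PMF.map_bind]
      refine congrArg _ (funext fun u => ?_)
      rw [PMF.map_comp]
      refine congrArg (fun f => PMF.map f _) (funext fun y => ?_)
      show ψ j ((A ^ a).mulVec y + u) = (A ^ (a+1)).mulVec y + ψ j u
      rw [hψA j, hψA j, Matrix.mulVec_add, Matrix.mulVec_mulVec, ← pow_succ']
      abel
    have rhs : (stepLaw ξ ψ (a+1)).bind
        (fun u => (stepLaw ξ ψ b).map (fun y => (A ^ (a+1)).mulVec y + u))
        = ξ.bind (fun j => (stepLaw ξ ψ a).bind (fun u =>
            (stepLaw ξ ψ b).map (fun y => (A ^ (a+1)).mulVec y + ψ j u))) := by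
      show (ξ.bind fun j => (stepLaw ξ ψ a).map (ψ j)).bind _ = _
      rw [PMF.bind_bind]
      refine congrArg _ (funext fun j => ?_)
      rw [PMF.bind_map]
      rfl
    rw [rhs]
    exact congrArg _ (funext key)

end StepLaw


section Iterate
variable {m K : ℕ} (ξ : PMF (Fin m)) (ψ : Fin m → (Fin K → ℝ) → (Fin K → ℝ))
variable (A : Matrix (Fin K) (Fin K) ℝ) (c : Fin m → (Fin K → ℝ))

lemma cont_mulVec (M : Matrix (Fin K) (Fin K) ℝ) :
    Continuous fun y : Fin K → ℝ => M.mulVec y := by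
  have he : (fun y : Fin K → ℝ => M.mulVec y) = fun y i => ∑ j, M i j * y j := by
    funext y i; rfl
  rw [he]
  exact continuous_pi fun i =>
    continuous_finset_sum _ fun j _ => continuous_const.mul (continuous_apply j)

variable (hψA : ∀ j x, ψ j x = A.mulVec x + c j)

include hψA in
lemma meas_psi (j : Fin m) : Measurable (ψ j) := by
  have : ψ j = fun x => A.mulVec x + c j := funext (hψA j)
  rw [this]
  exact ((cont_mulVec A).add continuous_const).measurable

variable (ν : Measure (Fin K → ℝ)) [IsProbabilityMeasure ν]
variable (hself : ν = ∑ j, ξ j • ν.map (ψ j))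

include hψA hself in
lemma nu_apply_self {s : Set (Fin K → ℝ)} (hs : MeasurableSet s) :
    ν s = ∑ j, ξ j * ν (ψ j ⁻¹' s) := by
  conv_lhs => rw [hself]
  rw [Measure.coe_finset_sum]
  rw [Finset.sum_apply]
  refine Finset.sum_congr rfl fun j _ => ?_
  rw [Measure.smul_apply, Measure.map_apply (meas_psi ψ A c hψA j) hs, smul_eq_mul]

include hψA hself in
lemma nu_iterate : ∀ n (s : Set (Fin K → ℝ)), MeasurableSet s →
    ν s = ∑' u, stepLaw ξ ψ n u * ν ((fun y => (A ^ n).mulVec y + u) ⁻¹' s) := by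
  intro n
  induction n with
  | zero =>
    intro s hs
    rw [tsum_eq_single (0 : Fin K → ℝ) (fun u hu => by
      show (PMF.pure 0) u * _ = 0
      rw [PMF.pure_apply, if_neg hu, zero_mul])]
    show ν s = (PMF.pure 0) 0 * ν ((fun y => (A ^ 0).mulVec y + 0) ⁻¹' s)
    have : (fun y : Fin K → ℝ => (A ^ 0).mulVec y + 0) = id := by
      funext y; simp [Matrix.one_mulVec]
    rw [PMF.pure_apply, if_pos rfl, one_mul, this, Set.preimage_id]
  | succ n ih =>
    intro s hs
    have hpre : ∀ j, MeasurableSet (ψ j ⁻¹' s) := fun j => hs.preimage (meas_psi ψ A c hψA j)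
    have exp : ∀ u, (stepLaw ξ ψ (n+1)) u
        = ∑' (j : Fin m), ∑' (t : Fin K → ℝ),
            ξ j * (if u = ψ j t then stepLaw ξ ψ n t else 0) := by
      intro u
      show (ξ.bind fun j => (stepLaw ξ ψ n).map (ψ j)) u = _
      rw [PMF.bind_apply]
      refine tsum_congr fun j => ?_
      rw [PMF.map_apply, ← ENNReal.tsum_mul_left]
      refine tsum_congr fun t => ?_
      congr 1
      split_ifs <;> rfl
    have keyset : ∀ (j : Fin m) (t : Fin K → ℝ),
        ((fun y => (A ^ (n+1)).mulVec y + ψ j t) ⁻¹' s)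
          = ((fun y => (A ^ n).mulVec y + t) ⁻¹' (ψ j ⁻¹' s)) := by
      intro j t
      ext y
      show ((A ^ (n+1)).mulVec y + ψ j t ∈ s) ↔ (ψ j ((A ^ n).mulVec y + t) ∈ s)
      have : ψ j ((A ^ n).mulVec y + t) = (A ^ (n+1)).mulVec y + ψ j t := by
        rw [hψA j, hψA j, Matrix.mulVec_add, Matrix.mulVec_mulVec, ← pow_succ']
        abel
      rw [this]
    calc ν s = ∑ j, ξ j * ν (ψ j ⁻¹' s) := nu_apply_self ξ ψ A c hψA ν hself hs
      _ = ∑' (j : Fin m), ξ j * ν (ψ j ⁻¹' s) := (tsum_fintype _).symm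
      _ = ∑' (j : Fin m), ∑' (t : Fin K → ℝ), ξ j *
            ((stepLaw ξ ψ n) t * ν ((fun y => (A ^ n).mulVec y + t) ⁻¹' (ψ j ⁻¹' s))) := by
          refine tsum_congr fun j => ?_
          rw [ENNReal.tsum_mul_left, ← ih (ψ j ⁻¹' s) (hpre j)]
      _ = ∑' (j : Fin m), ∑' (t : Fin K → ℝ), ∑' (u : Fin K → ℝ),
            (ξ j * (if u = ψ j t then stepLaw ξ ψ n t else 0))
              * ν ((fun y => (A ^ (n+1)).mulVec y + u) ⁻¹' s) := by
          refine tsum_congr fun j => tsum_congr fun t => ?_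
          rw [tsum_eq_single (ψ j t) (fun u hu => by rw [if_neg hu, mul_zero, zero_mul])]
          rw [if_pos rfl, keyset j t, mul_assoc]
      _ = ∑' (u : Fin K → ℝ), ∑' (j : Fin m), ∑' (t : Fin K → ℝ),
            (ξ j * (if u = ψ j t then stepLaw ξ ψ n t else 0))
              * ν ((fun y => (A ^ (n+1)).mulVec y + u) ⁻¹' s) := by
          have s1 : ∀ j : Fin m, (∑' (t : Fin K → ℝ), ∑' (u : Fin K → ℝ),
              (ξ j * (if u = ψ j t then stepLaw ξ ψ n t else 0))
                * ν ((fun y => (A ^ (n+1)).mulVec y + u) ⁻¹' s))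
              = ∑' (u : Fin K → ℝ), ∑' (t : Fin K → ℝ),
              (ξ j * (if u = ψ j t then stepLaw ξ ψ n t else 0))
                * ν ((fun y => (A ^ (n+1)).mulVec y + u) ⁻¹' s) :=
            fun j => ENNReal.tsum_comm
          rw [tsum_congr s1, ENNReal.tsum_comm]
      _ = ∑' u, stepLaw ξ ψ (n+1) u * ν ((fun y => (A ^ (n+1)).mulVec y + u) ⁻¹' s) := by
          refine tsum_congr fun u => ?_
          rw [exp u, ← ENNReal.tsum_mul_right]
          refine tsum_congr fun j => ?_
          rw [← ENNReal.tsum_mul_right]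

end Iterate


section MatrixBounds
variable {K : ℕ}

def Nmat (K : ℕ) : Matrix (Fin K) (Fin K) ℝ :=
  fun i j => if (i : ℕ) = (j : ℕ) + 1 then ((i : ℕ) : ℝ) else 0

lemma theta_decomp (lam : ℝ) (K : ℕ) : Theta lam K = lam • (1 : Matrix (Fin K) (Fin K) ℝ) + Nmat K := by
  funext i j
  show _ = lam * _ + _
  by_cases h : (i : ℕ) = (j : ℕ)
  · have : i = j := Fin.ext h
    subst this
    simp [Theta, Nmat, Matrix.one_apply]
  · have : i ≠ j := fun he => h (congrArg _ he)
    simp [Theta, Nmat, Matrix.one_apply_ne this, h]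

lemma finset_sum_mulVec {ι : Type*} (s : Finset ι) (M : ι → Matrix (Fin K) (Fin K) ℝ)
    (y : Fin K → ℝ) : (∑ i ∈ s, M i).mulVec y = ∑ i ∈ s, (M i).mulVec y := by
  classical
  induction s using Finset.cons_induction with
  | empty => simp [Matrix.zero_mulVec]
  | cons a s ha ih => rw [Finset.sum_cons, Finset.sum_cons, Matrix.add_mulVec, ih]

lemma mulVec_norm_le (M : Matrix (Fin K) (Fin K) ℝ) (cst : ℝ) (hc : 0 ≤ cst)
    (h : ∀ i, ∑ j, |M i j| ≤ cst) (y : Fin K → ℝ) : ‖M.mulVec y‖ ≤ cst * ‖y‖ := by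
  rw [pi_norm_le_iff_of_nonneg (mul_nonneg hc (norm_nonneg y))]
  intro i
  have e : M.mulVec y i = ∑ j, M i j * y j := rfl
  rw [Real.norm_eq_abs, e]
  calc |∑ j, M i j * y j| ≤ ∑ j, |M i j * y j| := Finset.abs_sum_le_sum_abs _ _
    _ ≤ ∑ j, |M i j| * ‖y‖ := by
        refine Finset.sum_le_sum fun j _ => ?_
        rw [abs_mul]
        exact mul_le_mul_of_nonneg_left (by
          rw [← Real.norm_eq_abs]; exact norm_le_pi_norm y j) (abs_nonneg _)
    _ = (∑ j, |M i j|) * ‖y‖ := by rw [Finset.sum_mul]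
    _ ≤ cst * ‖y‖ := mul_le_mul_of_nonneg_right (h i) (norm_nonneg y)

lemma Nmat_row (i : Fin K) : ∑ j, |Nmat K i j| ≤ (K : ℝ) := by
  classical
  by_cases hi : (i : ℕ) = 0
  · have : ∀ j : Fin K, |Nmat K i j| = 0 := fun j => by
      simp [Nmat, hi]
    simp only [this, Finset.sum_const_zero]
    exact Nat.cast_nonneg K
  · have hlt : (i : ℕ) - 1 < K := lt_of_le_of_lt (Nat.sub_le _ _) i.isLt
    set j₀ : Fin K := ⟨(i : ℕ) - 1, hlt⟩
    have : ∑ j, |Nmat K i j| = |Nmat K i j₀| := by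
      refine Finset.sum_eq_single j₀ (fun j _ hj => ?_) (by simp)
      have : ¬ ((i : ℕ) = (j : ℕ) + 1) := by
        intro he
        apply hj
        apply Fin.ext
        show (j : ℕ) = (i : ℕ) - 1
        omega
      simp [Nmat, this]
    rw [this]
    have : (i : ℕ) = (j₀ : ℕ) + 1 := by
      show (i : ℕ) = (i : ℕ) - 1 + 1
      omega
    rw [Nmat, if_pos this]
    rw [abs_of_nonneg (Nat.cast_nonneg _)]
    exact_mod_cast (i.isLt).le

lemma Nmat_pow_mulVec_norm (i : ℕ) (y : Fin K → ℝ) :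
    ‖(Nmat K ^ i).mulVec y‖ ≤ (K : ℝ) ^ i * ‖y‖ := by
  induction i with
  | zero => simp [Matrix.one_mulVec]
  | succ i ih =>
    rw [pow_succ']
    rw [← Matrix.mulVec_mulVec]
    calc ‖(Nmat K).mulVec ((Nmat K ^ i).mulVec y)‖
        ≤ (K : ℝ) * ‖(Nmat K ^ i).mulVec y‖ :=
          mulVec_norm_le _ _ (Nat.cast_nonneg K) Nmat_row _
      _ ≤ (K : ℝ) * ((K : ℝ) ^ i * ‖y‖) :=
          mul_le_mul_of_nonneg_left ih (Nat.cast_nonneg K)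
      _ = (K : ℝ) ^ (i+1) * ‖y‖ := by ring

lemma Nmat_pow_entry_zero : ∀ (i : ℕ) (p q : Fin K), (p : ℕ) < (q : ℕ) + i →
    (Nmat K ^ i) p q = 0 := by
  intro i
  induction i with
  | zero =>
    intro p q h
    have : p ≠ q := by
      intro he; subst he; omega
    simpa using Matrix.one_apply_ne this
  | succ i ih =>
    intro p q h
    rw [pow_succ]
    show ∑ r, (Nmat K ^ i) p r * Nmat K r q = 0
    refine Finset.sum_eq_zero fun r _ => ?_
    by_cases hr : (r : ℕ) = (q : ℕ) + 1
    · rw [ih p r (by omega), zero_mul]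
    · have : Nmat K r q = 0 := by simp [Nmat, hr]
      rw [this, mul_zero]

lemma Nmat_pow_eq_zero {i : ℕ} (h : K ≤ i) : (Nmat K ^ i) = 0 := by
  funext p q
  exact Nmat_pow_entry_zero i p q (by omega)

lemma theta_pow_mulVec_norm {lam : ℝ} (hlam : lam ∈ Set.Ioo (0:ℝ) 1) (hK : 1 ≤ K)
    (n : ℕ) (y : Fin K → ℝ) :
    ‖(Theta lam K ^ n).mulVec y‖
      ≤ ((K:ℝ) * ((K:ℝ)^K * lam⁻¹ ^ K)) * ((n:ℝ)+1) ^ K * lam ^ n * ‖y‖ := by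
  classical
  obtain ⟨hl0, hl1⟩ := hlam
  have hcomm : Commute (Nmat K) (lam • (1 : Matrix (Fin K) (Fin K) ℝ)) :=
    (Commute.one_right (Nmat K)).smul_right lam
  have hexp : Theta lam K ^ n
      = ∑ i ∈ Finset.range (n+1),
          ((n.choose i : ℝ) * lam ^ (n - i)) • (Nmat K ^ i) := by
    rw [theta_decomp, add_comm (lam • 1) (Nmat K), hcomm.add_pow]
    refine Finset.sum_congr rfl fun i hi => ?_
    rw [smul_pow, one_pow]
    have e1 : Nmat K ^ i * lam ^ (n-i) • (1 : Matrix (Fin K) (Fin K) ℝ)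
        = lam ^ (n-i) • (Nmat K ^ i) := by
      rw [mul_smul_comm, mul_one]
    rw [e1]
    have e2 : (lam ^ (n-i) • (Nmat K ^ i)) * (n.choose i : Matrix (Fin K) (Fin K) ℝ)
        = (n.choose i : ℝ) • (lam ^ (n-i) • (Nmat K ^ i)) := by
      rw [← (Nat.cast_commute (n.choose i) _).eq, ← nsmul_eq_mul,
        ← Nat.cast_smul_eq_nsmul ℝ]
    rw [e2, smul_smul]
  rw [hexp, finset_sum_mulVec]
  refine le_trans (norm_sum_le _ _) ?_
  have hterm : ∀ i ∈ Finset.range (n+1),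
      ‖(((n.choose i : ℝ) * lam ^ (n - i)) • (Nmat K ^ i)).mulVec y‖
        ≤ (if i < K then (((n:ℝ)+1)^K * (lam ^ n * lam⁻¹ ^ K) * ((K:ℝ)^K * ‖y‖)) else 0) := by
    intro i hi
    rw [Finset.mem_range] at hi
    rw [Matrix.smul_mulVec, norm_smul]
    by_cases hiK : i < K
    · rw [if_pos hiK]
      have h1 : ‖(n.choose i : ℝ) * lam ^ (n - i)‖ ≤ ((n:ℝ)+1)^K * (lam ^ n * lam⁻¹ ^ K) := by
        rw [norm_mul, Real.norm_eq_abs, Real.norm_eq_abs,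
          abs_of_nonneg (by positivity : (0:ℝ) ≤ (n.choose i : ℝ)),
          abs_of_nonneg (by positivity : (0:ℝ) ≤ lam ^ (n-i))]
        have hch : (n.choose i : ℝ) ≤ ((n:ℝ)+1)^K := by
          have h1 : n.choose i ≤ n ^ i := Nat.choose_le_pow n i
          have h2 : n ^ i ≤ (n+1) ^ K :=
            le_trans (Nat.pow_le_pow_left (Nat.le_succ n) i)
              (Nat.pow_le_pow_right (Nat.succ_le_succ (Nat.zero_le n)) (by omega))
          calc (n.choose i : ℝ) ≤ ((n ^ i : ℕ) : ℝ) := by exact_mod_cast h1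
            _ ≤ (((n+1) ^ K : ℕ) : ℝ) := by exact_mod_cast h2
            _ = ((n:ℝ)+1)^K := by push_cast; ring
        have hlp : lam ^ (n - i) ≤ lam ^ n * lam⁻¹ ^ K := by
          have hik : lam ^ K ≤ lam ^ i := pow_le_pow_of_le_one hl0.le hl1.le (by omega)
          have hin : i ≤ n := by omega
          have e : lam ^ (n - i) * lam ^ i = lam ^ n := pow_sub_mul_pow lam hin
          have hpi : (0:ℝ) < lam ^ i := by positivity
          have hpK : (0:ℝ) < lam ^ K := by positivity
          rw [show lam ^ n * lam⁻¹ ^ K = lam ^ n / lam ^ K by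
            rw [div_eq_mul_inv, inv_pow], le_div_iff₀ hpK]
          calc lam ^ (n-i) * lam ^ K ≤ lam ^ (n-i) * lam ^ i :=
                mul_le_mul_of_nonneg_left hik (by positivity)
            _ = lam ^ n := e
        calc (n.choose i : ℝ) * lam ^ (n-i) ≤ ((n:ℝ)+1)^K * lam ^ (n-i) :=
              mul_le_mul_of_nonneg_right hch (by positivity)
          _ ≤ ((n:ℝ)+1)^K * (lam ^ n * lam⁻¹ ^ K) :=
              mul_le_mul_of_nonneg_left hlp (by positivity)
      have h2 : ‖(Nmat K ^ i).mulVec y‖ ≤ (K:ℝ)^K * ‖y‖ := by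
        refine le_trans (Nmat_pow_mulVec_norm i y) ?_
        refine mul_le_mul_of_nonneg_right ?_ (norm_nonneg y)
        refine pow_le_pow_right₀ ?_ (by omega)
        exact_mod_cast hK
      calc ‖(n.choose i : ℝ) * lam ^ (n-i)‖ * ‖(Nmat K ^ i).mulVec y‖
          ≤ (((n:ℝ)+1)^K * (lam ^ n * lam⁻¹ ^ K)) * ((K:ℝ)^K * ‖y‖) := by
            refine mul_le_mul h1 h2 (norm_nonneg _) (by positivity)
        _ = ((n:ℝ)+1)^K * (lam ^ n * lam⁻¹ ^ K) * ((K:ℝ)^K * ‖y‖) := by ring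
    · rw [if_neg hiK]
      rw [Nmat_pow_eq_zero (by omega), Matrix.zero_mulVec, norm_zero, mul_zero]
  refine le_trans (Finset.sum_le_sum hterm) ?_
  rw [Finset.sum_ite, Finset.sum_const_zero, add_zero, Finset.sum_const]
  have hcard : ((Finset.range (n+1)).filter (fun i => i < K)).card ≤ K := by
    refine le_trans (Finset.card_le_card (fun i hi => ?_)) (by simp : (Finset.range K).card ≤ K)
    rw [Finset.mem_filter] at hi
    exact Finset.mem_range.mpr hi.2
  rw [nsmul_eq_mul]
  calc (((Finset.range (n+1)).filter (fun i => i < K)).card : ℝ)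
        * (((n:ℝ)+1)^K * (lam ^ n * lam⁻¹ ^ K) * ((K:ℝ)^K * ‖y‖))
      ≤ (K:ℝ) * (((n:ℝ)+1)^K * (lam ^ n * lam⁻¹ ^ K) * ((K:ℝ)^K * ‖y‖)) := by
        refine mul_le_mul_of_nonneg_right (by exact_mod_cast hcard) (by positivity)
    _ = ((K:ℝ) * ((K:ℝ)^K * lam⁻¹ ^ K)) * ((n:ℝ)+1) ^ K * lam ^ n * ‖y‖ := by ring

end MatrixBounds


lemma poly_geo {lam mu : ℝ} (h0 : 0 < lam) (hlt : lam < mu) (hm1 : mu < 1)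
    (C0 : ℝ) (K : ℕ) :
    ∃ C : ℝ, 0 < C ∧ ∀ n : ℕ, C0 * ((n:ℝ)+1) ^ K * lam ^ n ≤ C * mu ^ n := by
  have hmu0 : 0 < mu := lt_trans h0 hlt
  set r := lam / mu with hr
  have hr0 : 0 < r := div_pos h0 hmu0
  have hr1 : r < 1 := (div_lt_one hmu0).mpr hlt
  have habs : |r| < 1 := by rw [abs_of_pos hr0]; exact hr1
  have h1 : Tendsto (fun n : ℕ => ((n:ℝ)) ^ K * r ^ n) atTop (nhds 0) :=
    tendsto_pow_const_mul_const_pow_of_abs_lt_one K habs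
  have h2 : Tendsto (fun n : ℕ => ((n:ℝ)+1) ^ K * r ^ (n+1)) atTop (nhds 0) := by
    have h := h1.comp (tendsto_add_atTop_nat 1)
    have he : ((fun n : ℕ => ((n:ℝ)) ^ K * r ^ n) ∘ fun a => a + 1)
        = fun n : ℕ => ((n:ℝ)+1) ^ K * r ^ (n+1) := by
      funext n; simp only [Function.comp]; push_cast; ring_nf
    rwa [he] at h
  have h3 : Tendsto (fun n : ℕ => C0 * (((n:ℝ)+1) ^ K * r ^ n)) atTop (nhds 0) := by
    have : Tendsto (fun n : ℕ => (((n:ℝ)+1) ^ K * r ^ (n+1)) * r⁻¹) atTop (nhds 0) := by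
      simpa using h2.mul_const r⁻¹
    have he : (fun n : ℕ => (((n:ℝ)+1) ^ K * r ^ (n+1)) * r⁻¹)
        = fun n : ℕ => ((n:ℝ)+1) ^ K * r ^ n := by
      funext n
      field_simp
      ring
    rw [he] at this
    simpa using this.const_mul C0
  obtain ⟨C1, hC1⟩ := h3.bddAbove_range
  refine ⟨max C1 1, lt_of_lt_of_le one_pos (le_max_right _ _), fun n => ?_⟩
  have hb : C0 * (((n:ℝ)+1) ^ K * r ^ n) ≤ C1 := hC1 ⟨n, rfl⟩
  have hrn : r ^ n * mu ^ n = lam ^ n := by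
    rw [← mul_pow, hr, div_mul_cancel₀]
    exact ne_of_gt hmu0
  calc C0 * ((n:ℝ)+1) ^ K * lam ^ n = (C0 * (((n:ℝ)+1) ^ K * r ^ n)) * mu ^ n := by
        rw [← hrn]; ring
    _ ≤ C1 * mu ^ n := mul_le_mul_of_nonneg_right hb (by positivity)
    _ ≤ max C1 1 * mu ^ n := mul_le_mul_of_nonneg_right (le_max_left _ _) (by positivity)


lemma main_key {m K : ℕ} (ξ : PMF (Fin m)) (ψ : Fin m → (Fin K → ℝ) → (Fin K → ℝ))
    (cvec : Fin m → (Fin K → ℝ)) (lam : ℝ) (hl0 : 0 < lam) (hl1 : lam < 1) (hK : 1 ≤ K)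
    (hψA : ∀ j x, ψ j x = (Theta lam K).mulVec x + cvec j)
    (ν : Measure (Fin K → ℝ)) [IsProbabilityMeasure ν]
    (hself : ν = ∑ j, ξ j • ν.map (ψ j))
    (F : ℕ → Finset (Fin K → ℝ)) (hF : ∀ n, PMFSupp (stepLaw ξ ψ n) (F n))
    (d : ℝ) (hd0 : 0 ≤ d)
    (hdim : ∀ᵐ x ∂ν, Tendsto
      (fun r => Real.log (ν (Metric.closedBall x r)).toReal / Real.log r)
      (nhdsWithin 0 (Set.Ioi 0)) (nhds d))
    (hent : ℝ) (hh0 : 0 ≤ hent)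
    (M : ℝ) (hM0 : 0 ≤ M) (hM : (1:ℝ≥0∞)/2 ≤ ν (Metric.closedBall 0 M))
    (mu : ℝ) (hmul : lam < mu) (hmu1 : mu < 1) (ε : ℝ) (hε : 0 < ε)
    (n₁ : ℕ) (hn₁ : 1 ≤ n₁)
    (hEnt1 : ∀ k : ℕ, pmfEntropy (stepLaw ξ ψ ((k+1) * n₁))
      ≤ (((k+1) * n₁ : ℕ) : ℝ) * (hent + ε)) :
    d * Real.log mu⁻¹ ≤ hent + 2 * ε := by
  classical
  set A := Theta lam K with hA
  have hmu0 : 0 < mu := lt_trans hl0 hmul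
  have hLmu : 0 < Real.log mu⁻¹ := Real.log_pos (by
    rw [one_lt_inv_iff₀]; exact ⟨hmu0, hmu1⟩)
  set cexp : ℝ := hent + 2 * ε with hcexp
  have hc0 : 0 < cexp := by simp only [hcexp]; linarith
  -- radius sequence
  obtain ⟨C, hC0, hCb⟩ := poly_geo hl0 hmul hmu1 (((K:ℝ) * ((K:ℝ)^K * lam⁻¹ ^ K)) * M) K
  set r : ℕ → ℝ := fun n => C * mu ^ n with hrdef
  have hr0 : ∀ n, 0 < r n := fun n => by positivity
  have hcover : ∀ (n : ℕ) (y : Fin K → ℝ), y ∈ Metric.closedBall (0 : Fin K → ℝ) M →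
      ‖(A ^ n).mulVec y‖ ≤ r n := by
    intro n y hy
    have hyM : ‖y‖ ≤ M := by simpa using hy
    calc ‖(A ^ n).mulVec y‖
        ≤ ((K:ℝ) * ((K:ℝ)^K * lam⁻¹ ^ K)) * ((n:ℝ)+1) ^ K * lam ^ n * ‖y‖ :=
          theta_pow_mulVec_norm ⟨hl0, hl1⟩ hK n y
      _ ≤ ((K:ℝ) * ((K:ℝ)^K * lam⁻¹ ^ K)) * ((n:ℝ)+1) ^ K * lam ^ n * M := by
          have hnn : (0:ℝ) ≤ ((K:ℝ) * ((K:ℝ)^K * lam⁻¹ ^ K)) * ((n:ℝ)+1) ^ K * lam ^ n := by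
            positivity
          exact mul_le_mul_of_nonneg_left hyM hnn
      _ = (((K:ℝ) * ((K:ℝ)^K * lam⁻¹ ^ K)) * M) * ((n:ℝ)+1) ^ K * lam ^ n := by ring
      _ ≤ C * mu ^ n := hCb n
  -- scales
  set nseq : ℕ → ℕ := fun k => (k+1) * n₁ with hnseq
  have hnseq_pos : ∀ k, 0 < nseq k := fun k => by positivity
  have hnseq_tend : Tendsto (fun k => ((nseq k : ℕ) : ℝ)) atTop atTop := by
    refine tendsto_atTop_mono (fun k => ?_) tendsto_natCast_atTop_atTop
    have : k ≤ nseq k := by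
      simp only [hnseq]
      calc k ≤ k + 1 := Nat.le_succ k
        _ ≤ (k + 1) * n₁ := Nat.le_mul_of_pos_right _ (by omega)
    exact_mod_cast this
  set q : ℕ → PMF (Fin K → ℝ) := fun k => stepLaw ξ ψ (nseq k) with hq
  -- high-mass atoms
  set Sk : ℕ → Finset (Fin K → ℝ) := fun k => (F (nseq k)).filter
    (fun τ => Real.exp (-((nseq k : ℝ) * cexp)) ≤ ((q k) τ).toReal) with hSk
  have hMarkov : ∀ k, ε / cexp ≤ ∑ τ ∈ Sk k, ((q k) τ).toReal := by
    intro k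
    set n := nseq k with hn
    have hn1 : (1:ℝ) ≤ (n:ℝ) := by exact_mod_cast hnseq_pos k
    set s1 := ∑ τ ∈ Sk k, ((q k) τ).toReal with hs1
    set s2 := ∑ τ ∈ (F n).filter
      (fun τ => ¬ (Real.exp (-((n : ℝ) * cexp)) ≤ ((q k) τ).toReal)), ((q k) τ).toReal with hs2
    have htot : s1 + s2 = 1 := by
      rw [hs1, hs2, hSk]
      rw [Finset.sum_filter_add_sum_filter_not]
      exact pmfSupp_sum_toReal (hF n)
    have hHle : pmfEntropy (q k) ≤ (n:ℝ) * (hent + ε) := hEnt1 k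
    have hHge : ((n:ℝ) * cexp) * s2 ≤ pmfEntropy (q k) := by
      rw [pmfEntropy_eq (hF n)]
      rw [← Finset.sum_filter_add_sum_filter_not (F n)
        (fun τ => Real.exp (-((n : ℝ) * cexp)) ≤ ((q k) τ).toReal)]
      have hpos : 0 ≤ ∑ τ ∈ Sk k, Real.negMulLog (((q k) τ).toReal) := by
        refine Finset.sum_nonneg fun τ _ => ?_
        exact Real.negMulLog_nonneg (pmf_toReal_nonneg _ _) (pmf_toReal_le_one _ _)
      have hterm : ∀ τ ∈ (F n).filter
          (fun τ => ¬ (Real.exp (-((n : ℝ) * cexp)) ≤ ((q k) τ).toReal)),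
          ((n:ℝ) * cexp) * ((q k) τ).toReal ≤ Real.negMulLog (((q k) τ).toReal) := by
        intro τ hτ
        rw [Finset.mem_filter] at hτ
        have hlt : ((q k) τ).toReal < Real.exp (-((n : ℝ) * cexp)) := lt_of_not_ge hτ.2
        rcases (pmf_toReal_nonneg (q k) τ).eq_or_lt with h0 | h0
        · rw [← h0]; simp [Real.negMulLog_zero]
        · have hlog : Real.log (((q k) τ).toReal) < -((n : ℝ) * cexp) := by
            have := Real.log_lt_log h0 hlt
            rwa [Real.log_exp] at this
          rw [Real.negMulLog]
          nlinarith
      have := Finset.sum_le_sum hterm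
      rw [← Finset.mul_sum] at this
      have heq : (F n).filter
          (fun τ => ¬ (Real.exp (-((n : ℝ) * cexp)) ≤ ((q k) τ).toReal))
          = (F n).filter
          (fun τ => ¬ (Real.exp (-((nseq k : ℝ) * cexp)) ≤ ((stepLaw ξ ψ (nseq k)) τ).toReal)) := rfl
      calc ((n:ℝ) * cexp) * s2 ≤ ∑ τ ∈ (F n).filter
            (fun τ => ¬ (Real.exp (-((n : ℝ) * cexp)) ≤ ((q k) τ).toReal)),
            Real.negMulLog (((q k) τ).toReal) := this
        _ ≤ _ := le_add_of_nonneg_left hpos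
    have hncexp : 0 < (n:ℝ) * cexp := by positivity
    rw [div_le_iff₀ hc0]
    have h2 : cexp * s2 ≤ hent + ε := by
      have hd2 : ((n:ℝ) * cexp) * s2 ≤ (n:ℝ) * (hent + ε) := le_trans hHge hHle
      have hs2nn : 0 ≤ s2 := Finset.sum_nonneg fun τ _ => pmf_toReal_nonneg _ _
      nlinarith
    nlinarith
  -- the union sets
  set Ek : ℕ → Set (Fin K → ℝ) := fun k => ⋃ τ ∈ Sk k, Metric.closedBall τ (r (nseq k))
    with hEk
  have hEkmeas : ∀ k, MeasurableSet (Ek k) := fun k =>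
    (Sk k).measurableSet_biUnion (fun τ _ => measurableSet_closedBall)
  have hballs : ∀ k (τ : Fin K → ℝ), τ ∈ Sk k → ∀ (s : Set (Fin K → ℝ)), MeasurableSet s →
      Metric.closedBall τ (r (nseq k)) ⊆ s →
      ENNReal.ofReal (Real.exp (-((nseq k : ℝ) * cexp))) * ((1:ℝ≥0∞)/2) ≤ ν s := by
    intro k τ hτ s hs hsub
    have hiter := nu_iterate ξ ψ A cvec hψA ν hself (nseq k) s hs
    have hterm : (q k) τ * ν ((fun y => (A ^ (nseq k)).mulVec y + τ) ⁻¹' s) ≤ ν s := by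
      rw [hiter]
      exact ENNReal.le_tsum τ
    refine le_trans ?_ hterm
    have hsub2 : Metric.closedBall (0 : Fin K → ℝ) M
        ⊆ (fun y => (A ^ (nseq k)).mulVec y + τ) ⁻¹' s := by
      intro y hy
      refine hsub ?_
      rw [Metric.mem_closedBall, dist_eq_norm]
      simpa using hcover (nseq k) y hy
    have h1 : ENNReal.ofReal (Real.exp (-((nseq k : ℝ) * cexp))) ≤ (q k) τ := by
      rw [hSk] at hτ
      rw [Finset.mem_filter] at hτ
      exact ENNReal.ofReal_le_of_le_toReal hτ.2
    have h2 : ((1:ℝ≥0∞)/2) ≤ ν ((fun y => (A ^ (nseq k)).mulVec y + τ) ⁻¹' s) :=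
      le_trans hM (measure_mono hsub2)
    exact mul_le_mul' h1 h2
  have hEkmass : ∀ k, ENNReal.ofReal (ε / cexp) * ((1:ℝ≥0∞)/2) ≤ ν (Ek k) := by
    intro k
    have hiter := nu_iterate ξ ψ A cvec hψA ν hself (nseq k) (Ek k) (hEkmeas k)
    have hsum : ∑ τ ∈ Sk k, (q k) τ * ν ((fun y => (A ^ (nseq k)).mulVec y + τ) ⁻¹' (Ek k))
        ≤ ν (Ek k) := by
      rw [hiter]
      exact ENNReal.sum_le_tsum (Sk k)
    refine le_trans ?_ hsum
    have hterm : ∀ τ ∈ Sk k,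
        (q k) τ * ((1:ℝ≥0∞)/2)
          ≤ (q k) τ * ν ((fun y => (A ^ (nseq k)).mulVec y + τ) ⁻¹' (Ek k)) := by
      intro τ hτ
      refine mul_le_mul_right ?_ _
      refine le_trans hM (measure_mono ?_)
      intro y hy
      show (A ^ (nseq k)).mulVec y + τ ∈ Ek k
      rw [hEk]
      refine Set.mem_biUnion hτ ?_
      rw [Metric.mem_closedBall, dist_eq_norm]
      simpa using hcover (nseq k) y hy
    refine le_trans ?_ (Finset.sum_le_sum hterm)
    rw [← Finset.sum_mul]
    refine mul_le_mul_left ?_ _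
    have he : ∑ τ ∈ Sk k, (q k) τ = ENNReal.ofReal (∑ τ ∈ Sk k, ((q k) τ).toReal) := by
      rw [ENNReal.ofReal_sum_of_nonneg (fun τ _ => pmf_toReal_nonneg _ _)]
      refine Finset.sum_congr rfl fun τ _ => ?_
      rw [ENNReal.ofReal_toReal]
      exact ne_top_of_le_ne_top ENNReal.one_ne_top ((q k).coe_le_one τ)
    rw [he]
    exact ENNReal.ofReal_le_ofReal (hMarkov k)
  -- limsup set
  set G : Set (Fin K → ℝ) := ⋂ (j : ℕ), ⋃ (k : ℕ), ⋃ (_ : j ≤ k), Ek k with hG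
  have hGmass : ENNReal.ofReal (ε / cexp) * ((1:ℝ≥0∞)/2) ≤ ν G := by
    set U : ℕ → Set (Fin K → ℝ) := fun j => ⋃ (k : ℕ), ⋃ (_ : j ≤ k), Ek k with hU
    have hUmeas : ∀ j, MeasurableSet (U j) :=
      fun j => MeasurableSet.iUnion fun k => MeasurableSet.iUnion fun _ => hEkmeas k
    have hUanti : Antitone U := by
      intro j j' hjj'
      refine Set.iUnion₂_subset fun k hk => ?_
      exact Set.subset_iUnion₂ (s := fun k _ => Ek k) k (le_trans hjj' hk)
    have hGU : ν G = ⨅ j, ν (U j) := by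
      refine hUanti.measure_iInter
        (fun j => (hUmeas j).nullMeasurableSet) ⟨0, measure_ne_top ν _⟩
    rw [hGU]
    refine le_iInf fun j => ?_
    refine le_trans (hEkmass j) (measure_mono ?_)
    exact Set.subset_iUnion₂ (s := fun k _ => Ek k) j le_rfl
  -- pick a good point
  obtain ⟨x₀, hx₀G, hx₀dim⟩ : ∃ x₀, x₀ ∈ G ∧ Tendsto
      (fun rad => Real.log (ν (Metric.closedBall x₀ rad)).toReal / Real.log rad)
      (nhdsWithin 0 (Set.Ioi 0)) (nhds d) := by
    set bad := {x : Fin K → ℝ | ¬ Tendsto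
      (fun rad => Real.log (ν (Metric.closedBall x rad)).toReal / Real.log rad)
      (nhdsWithin 0 (Set.Ioi 0)) (nhds d)} with hbad
    have hbad0 : ν bad = 0 := hdim
    have hne : ν (G \ bad) ≠ 0 := by
      rw [measure_diff_null hbad0]
      intro h0
      rw [h0] at hGmass
      have h1 : ENNReal.ofReal (ε / cexp) * ((1:ℝ≥0∞)/2) ≠ 0 := by
        refine mul_ne_zero ?_ (by norm_num)
        simpa using (ENNReal.ofReal_pos.mpr (div_pos hε hc0)).ne'
      exact h1 (le_antisymm hGmass zero_le)
    obtain ⟨x₀, hx₀⟩ := MeasureTheory.nonempty_of_measure_ne_zero hne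
    exact ⟨x₀, hx₀.1, not_not.mp hx₀.2⟩
  have hfreq : ∃ᶠ k in atTop, x₀ ∈ Ek k := by
    rw [frequently_atTop]
    intro j
    have := Set.mem_iInter.mp hx₀G j
    rw [Set.mem_iUnion] at this
    obtain ⟨k, hk⟩ := this
    rw [Set.mem_iUnion] at hk
    obtain ⟨hjk, hmem⟩ := hk
    exact ⟨k, hjk, hmem⟩
  -- radius sequence at x₀
  set R : ℕ → ℝ := fun k => 2 * r (nseq k) with hR
  have hRpos : ∀ k, 0 < R k := fun k => by
    have := hr0 (nseq k); simp only [hR]; linarith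
  have hRtend : Tendsto R atTop (nhds 0) := by
    set ρ := mu ^ n₁ with hρ
    have hρ0 : 0 ≤ ρ := by positivity
    have hρ1 : ρ < 1 := pow_lt_one₀ (le_of_lt hmu0) hmu1 (by omega)
    have h1 : Tendsto (fun k : ℕ => (2 * C) * (ρ ^ k * ρ)) atTop (nhds 0) := by
      have := ((tendsto_pow_atTop_nhds_zero_of_lt_one hρ0 hρ1).mul_const ρ).const_mul (2 * C)
      simpa using this
    have he : R = fun k : ℕ => (2 * C) * (ρ ^ k * ρ) := by
      funext k
      simp only [hR, hrdef, hρ, hnseq]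
      rw [← pow_succ, ← pow_mul]
      ring_nf
    rw [he]
    exact h1
  have hRlt1 : ∀ᶠ k in atTop, R k < 1 :=
    hRtend.eventually (eventually_lt_nhds (by norm_num))
  -- ratio bound
  have hball_lb : ∀ k, x₀ ∈ Ek k →
      Real.exp (-((nseq k : ℝ) * cexp)) * (1/2 : ℝ)
        ≤ (ν (Metric.closedBall x₀ (R k))).toReal := by
    intro k hx
    rw [hEk] at hx
    simp only [Set.mem_iUnion] at hx
    obtain ⟨τ, hτS, hτd⟩ := hx
    have hsub : Metric.closedBall τ (r (nseq k)) ⊆ Metric.closedBall x₀ (R k) := by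
      intro z hz
      rw [Metric.mem_closedBall] at *
      have h1 : dist z x₀ ≤ dist z τ + dist τ x₀ := dist_triangle z τ x₀
      have h2 : dist τ x₀ ≤ r (nseq k) := by rw [dist_comm]; exact hτd
      simp only [hR]
      linarith
    have := hballs k τ hτS (Metric.closedBall x₀ (R k)) measurableSet_closedBall hsub
    have htr := ENNReal.toReal_mono (measure_ne_top ν _) this
    refine le_trans (le_of_eq ?_) htr
    rw [ENNReal.toReal_mul, ENNReal.toReal_ofReal (Real.exp_nonneg _)]
    norm_num
  set β : ℕ → ℝ := fun k => ((nseq k : ℝ) * cexp + Real.log 2) / (-Real.log (R k)) with hβ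
  have hfr2 : ∃ᶠ k in atTop,
      Real.log (ν (Metric.closedBall x₀ (R k))).toReal / Real.log (R k) ≤ β k := by
    refine (hfreq.and_eventually hRlt1).mono ?_
    rintro k ⟨hxk, hRk1⟩
    have hb := hball_lb k hxk
    have hLR : Real.log (R k) < 0 := Real.log_neg (hRpos k) hRk1
    have hbpos : 0 < Real.exp (-((nseq k : ℝ) * cexp)) * (1/2 : ℝ) := by positivity
    have hlogb : Real.log (Real.exp (-((nseq k : ℝ) * cexp)) * (1/2 : ℝ))
        = -(((nseq k : ℝ)) * cexp + Real.log 2) := by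
      rw [Real.log_mul (Real.exp_ne_zero _) (by norm_num), Real.log_exp, one_div,
        Real.log_inv]
      ring
    have hlogν : -(((nseq k : ℝ)) * cexp + Real.log 2)
        ≤ Real.log (ν (Metric.closedBall x₀ (R k))).toReal := by
      rw [← hlogb]
      exact Real.log_le_log hbpos hb
    have hβeq : β k = (-(((nseq k : ℝ)) * cexp + Real.log 2)) / Real.log (R k) := by
      simp only [hβ]
      rw [div_neg, neg_div]
    rw [hβeq, div_eq_mul_inv, div_eq_mul_inv]
    have hinvneg : (Real.log (R k))⁻¹ ≤ 0 := le_of_lt (inv_neg''.mpr hLR)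
    exact mul_le_mul_of_nonpos_right hlogν hinvneg
  have hβtend : Tendsto β atTop (nhds (cexp / Real.log mu⁻¹)) := by
    have hlogR : ∀ k, Real.log (R k)
        = Real.log 2 + Real.log C + (nseq k : ℝ) * Real.log mu := by
      intro k
      simp only [hR, hrdef]
      rw [Real.log_mul two_ne_zero (ne_of_gt (hr0 _)),
        Real.log_mul (ne_of_gt hC0) (by positivity), Real.log_pow]
      push_cast
      ring
    have heβ : β = fun k => (cexp + Real.log 2 / (nseq k : ℝ))
        / (Real.log mu⁻¹ - (Real.log 2 + Real.log C) / (nseq k : ℝ)) := by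
      funext k
      have hnk : ((nseq k : ℕ) : ℝ) ≠ 0 := by
        have := hnseq_pos k
        positivity
      simp only [hβ]
      rw [hlogR k, Real.log_inv]
      have e1 : cexp + Real.log 2 / (nseq k : ℝ)
          = ((nseq k : ℝ) * cexp + Real.log 2) / (nseq k : ℝ) := by
        field_simp
      have e2 : -Real.log mu - (Real.log 2 + Real.log C) / (nseq k : ℝ)
          = (-(Real.log 2 + Real.log C + (nseq k : ℝ) * Real.log mu)) / (nseq k : ℝ) := by
        field_simp
        ring
      rw [e1, e2]
      rcases eq_or_ne (-(Real.log 2 + Real.log C + (nseq k : ℝ) * Real.log mu)) 0 with h|h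
      · rw [h]; simp
      · field_simp
    rw [heβ]
    have hnum : Tendsto (fun k => cexp + Real.log 2 / (nseq k : ℝ)) atTop (nhds (cexp + 0)) :=
      tendsto_const_nhds.add (Tendsto.div_atTop tendsto_const_nhds hnseq_tend)
    have hden : Tendsto (fun k => Real.log mu⁻¹ - (Real.log 2 + Real.log C) / (nseq k : ℝ))
        atTop (nhds (Real.log mu⁻¹ - 0)) :=
      tendsto_const_nhds.sub (Tendsto.div_atTop tendsto_const_nhds hnseq_tend)
    have hdiv := Tendsto.div hnum hden (by rw [sub_zero]; exact ne_of_gt hLmu)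
    rw [add_zero, sub_zero] at hdiv
    exact hdiv
  have hrt : Tendsto (fun k => Real.log (ν (Metric.closedBall x₀ (R k))).toReal
      / Real.log (R k)) atTop (nhds d) := by
    refine hx₀dim.comp ?_
    refine tendsto_nhdsWithin_of_tendsto_nhds_of_eventually_within _ hRtend ?_
    exact Eventually.of_forall (fun k => hRpos k)
  -- conclude d ≤ cexp / log mu⁻¹
  have hdle : d ≤ cexp / Real.log mu⁻¹ := by
    by_contra hcon
    push_neg at hcon
    set mid := (cexp / Real.log mu⁻¹ + d) / 2 with hmid
    have h1 : ∀ᶠ k in atTop, mid < Real.log (ν (Metric.closedBall x₀ (R k))).toReal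
        / Real.log (R k) := hrt.eventually (eventually_gt_nhds (by
          simp only [hmid]; linarith))
    have h2 : ∀ᶠ k in atTop, β k < mid := hβtend.eventually (eventually_lt_nhds (by
          simp only [hmid]; linarith))
    have := (hfr2.and_eventually (h1.and h2)).exists
    obtain ⟨k, hk1, hk2, hk3⟩ := this
    linarith
  calc d * Real.log mu⁻¹ ≤ (cexp / Real.log mu⁻¹) * Real.log mu⁻¹ :=
        mul_le_mul_of_nonneg_right hdle (le_of_lt hLmu)
    _ = cexp := div_mul_cancel₀ cexp (ne_of_gt hLmu)

/-- The self-affine measure `ν_{R,λ,K}` associated to the IFS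
`{x ↦ Θ(λ,K)x + v_j(R,λ,K)}` (where `v_j` is built from `T_j(Y₁,Y₂) = a_jY₁ + b_jY₂`
and the first `K-1` derivatives at `λ` of a local analytic representative `g` of
`R = F₁/F₂ ∈ R_L`) has exact dimension at most `h(R,λ,K)/log λ⁻¹`, where
`h(R,λ,K) = lim_n H(B^{(n)}_{R,λ,K})/n = inf_n H(B^{(n)}_{R,λ,K})/n`. -/
theorem stmt18 {m : ℕ} (a b : Fin m → ℤ) (hab : Function.Injective fun j => (a j, b j))
    (ξ : PMF (Fin m)) (hξ : ∀ j, ξ j ≠ 0)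
    (lam : ℝ) (hlam : lam ∈ Set.Ioo (0 : ℝ) 1) (K : ℕ) (hK : 1 ≤ K)
    (L : ℕ) (F₁ F₂ : PowerSeries ℤ) (hF₂ : F₂ ≠ 0)
    (hc1 : ∀ i : ℕ, |PowerSeries.coeff (R := ℤ) i F₁| ≤ (L : ℤ))
    (hc2 : ∀ i : ℕ, |PowerSeries.coeff (R := ℤ) i F₂| ≤ (L : ℤ))
    (g : ℝ → ℝ) (hg : AnalyticAt ℝ g lam)
    (hgr : ∀ᶠ x in nhds lam, seriesFun F₂ x * g x = seriesFun F₁ x)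
    (ψ : Fin m → (Fin K → ℝ) → (Fin K → ℝ))
    (hψ : ∀ j x i, ψ j x i = (Theta lam K).mulVec x i +
      ((if (i : ℕ) = 0 then ((a j : ℤ) : ℝ) else 0) +
        ((b j : ℤ) : ℝ) * iteratedDeriv (i : ℕ) g lam))
    (ν : Measure (Fin K → ℝ)) [IsProbabilityMeasure ν]
    (hself : ν = ∑ j, ξ j • ν.map (ψ j))
    (d : ℝ)
    (hdim : ∀ᵐ x ∂ν, Tendsto
      (fun r => Real.log (ν (Metric.closedBall x r)).toReal / Real.log r)
      (nhdsWithin 0 (Set.Ioi 0)) (nhds d)) :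
    d ≤ (⨅ n : ℕ, pmfEntropy (stepLaw ξ ψ (n + 1)) / ((n : ℝ) + 1)) / Real.log lam⁻¹ := by
  classical
  obtain ⟨hl0, hl1⟩ := hlam
  set cvec : Fin m → (Fin K → ℝ) := fun j i =>
    (if (i : ℕ) = 0 then ((a j : ℤ) : ℝ) else 0)
      + ((b j : ℤ) : ℝ) * iteratedDeriv (i : ℕ) g lam with hcvec
  have hψA : ∀ j x, ψ j x = (Theta lam K).mulVec x + cvec j := by
    intro j x
    funext i
    rw [hψ j x i]
    rfl
  have hL : 0 < Real.log lam⁻¹ := Real.log_pos (by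
    rw [one_lt_inv_iff₀]; exact ⟨hl0, hl1⟩)
  choose F hF using stepLaw_supp ξ ψ
  have hent_nonneg : ∀ n, 0 ≤ pmfEntropy (stepLaw ξ ψ n) := fun n => pmfEntropy_nonneg (hF n)
  set hent := ⨅ n : ℕ, pmfEntropy (stepLaw ξ ψ (n + 1)) / ((n : ℝ) + 1) with hhent
  have hh0 : 0 ≤ hent := le_ciInf fun n => div_nonneg (hent_nonneg _) (by positivity)
  have hsub : ∀ a' b' : ℕ, pmfEntropy (stepLaw ξ ψ (a' + b'))
      ≤ pmfEntropy (stepLaw ξ ψ a') + pmfEntropy (stepLaw ξ ψ b') := by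
    intro a' b'
    rw [stepLaw_decomp ξ ψ (Theta lam K) cvec hψA a' b']
    exact pmfEntropy_bind_le (hF a') _
      (fun u => (F b').image (fun y => ((Theta lam K) ^ a').mulVec y + u))
      (fun u => pmfSupp_map (hF b') _)
      (pmfEntropy (stepLaw ξ ψ b')) (hent_nonneg b')
      (fun u => pmfEntropy_map_le (hF b') _)
  have hmulent : ∀ (n₁ : ℕ) (k : ℕ), pmfEntropy (stepLaw ξ ψ ((k+1) * n₁))
      ≤ ((k:ℝ)+1) * pmfEntropy (stepLaw ξ ψ n₁) := by
    intro n₁ k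
    induction k with
    | zero => simp
    | succ k ih =>
      have he : (k+1+1) * n₁ = (k+1) * n₁ + n₁ := by ring
      rw [he]
      refine le_trans (hsub _ _) ?_
      push_cast
      linarith
  -- d is nonnegative
  have hd0 : 0 ≤ d := by
    have hνne : ν ≠ 0 := IsProbabilityMeasure.ne_zero ν
    have : (MeasureTheory.ae ν).NeBot := MeasureTheory.ae_neBot.mpr hνne
    obtain ⟨x, hx⟩ := hdim.exists
    have hev : ∀ᶠ rr in nhdsWithin (0:ℝ) (Set.Ioi 0),
        0 ≤ Real.log (ν (Metric.closedBall x rr)).toReal / Real.log rr := by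
      have h1 : ∀ᶠ rr in nhdsWithin (0:ℝ) (Set.Ioi 0), rr ∈ Set.Ioi (0:ℝ) :=
        eventually_mem_nhdsWithin
      have h2 : ∀ᶠ rr in nhdsWithin (0:ℝ) (Set.Ioi 0), rr < 1 :=
        Filter.Eventually.filter_mono nhdsWithin_le_nhds
          (eventually_lt_nhds (by norm_num : (0:ℝ) < 1))
      filter_upwards [h1, h2] with rr hr0 hr1
      have hlogr : Real.log rr < 0 := Real.log_neg hr0 hr1
      have hlogν : Real.log (ν (Metric.closedBall x rr)).toReal ≤ 0 := by
        refine Real.log_nonpos ENNReal.toReal_nonneg ?_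
        have h3 : ν (Metric.closedBall x rr) ≤ 1 := prob_le_one
        have := ENNReal.toReal_mono ENNReal.one_ne_top h3
        simpa using this
      have hq := div_nonneg (neg_nonneg.mpr hlogν) (neg_nonneg.mpr (le_of_lt hlogr))
      rwa [neg_div_neg_eq] at hq
    exact ge_of_tendsto hx hev
  -- a bounded set of measure at least 1/2
  obtain ⟨M, hM0, hM⟩ : ∃ M : ℝ, 0 ≤ M ∧ (1:ℝ≥0∞)/2 ≤ ν (Metric.closedBall 0 M) := by
    have hmono : Monotone (fun k : ℕ => Metric.closedBall (0 : Fin K → ℝ) (k : ℝ)) :=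
      fun i j hij => Metric.closedBall_subset_closedBall (by exact_mod_cast hij)
    have hU : ⋃ (k : ℕ), Metric.closedBall (0 : Fin K → ℝ) (k : ℝ) = Set.univ := by
      ext x
      simp only [Set.mem_iUnion, Metric.mem_closedBall, Set.mem_univ, iff_true]
      obtain ⟨k, hk⟩ := exists_nat_ge (dist x 0)
      exact ⟨k, hk⟩
    have hsup := hmono.measure_iUnion (μ := ν)
    rw [hU, measure_univ] at hsup
    have h12 : (1:ℝ≥0∞)/2 < ⨆ (k : ℕ), ν (Metric.closedBall (0 : Fin K → ℝ) (k : ℝ)) := by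
      rw [← hsup]
      exact ENNReal.half_lt_self one_ne_zero ENNReal.one_ne_top
    obtain ⟨k, hk⟩ := lt_iSup_iff.mp h12
    exact ⟨(k:ℝ), Nat.cast_nonneg k, le_of_lt hk⟩
  -- key inequality for all mu, ε
  have key : ∀ mu, lam < mu → mu < 1 → ∀ ε, 0 < ε → d * Real.log mu⁻¹ ≤ hent + 2 * ε := by
    intro mu hmu hmu1 ε hε
    obtain ⟨n₀, hn₀⟩ : ∃ n₀ : ℕ, pmfEntropy (stepLaw ξ ψ (n₀ + 1)) / ((n₀:ℝ)+1) < hent + ε := by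
      refine exists_lt_of_ciInf_lt ?_
      rw [← hhent]
      exact lt_add_of_pos_right hent hε
    have hE1 : pmfEntropy (stepLaw ξ ψ (n₀ + 1)) ≤ ((n₀:ℝ)+1) * (hent + ε) := by
      have hp : (0:ℝ) < (n₀:ℝ)+1 := by positivity
      rw [div_lt_iff₀ hp] at hn₀
      linarith
    have hEnt1 : ∀ k : ℕ, pmfEntropy (stepLaw ξ ψ ((k+1) * (n₀+1)))
        ≤ (((k+1) * (n₀+1) : ℕ) : ℝ) * (hent + ε) := by
      intro k
      refine le_trans (hmulent (n₀+1) k) ?_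
      have hk1 : (0:ℝ) ≤ (k:ℝ)+1 := by positivity
      have := mul_le_mul_of_nonneg_left hE1 hk1
      push_cast
      nlinarith
    exact main_key ξ ψ cvec lam hl0 hl1 hK hψA ν hself F hF d hd0 hdim
      hent hh0 M hM0 hM mu hmu hmu1 ε hε (n₀+1) (by omega) hEnt1
  -- conclude
  rw [le_div_iff₀ hL]
  by_contra hcon
  push_neg at hcon
  set η := d * Real.log lam⁻¹ - hent with hη
  have hηpos : 0 < η := by simp only [hη]; linarith
  set t := η / (4 * (d+1)) with ht
  have htpos : 0 < t := by
    refine div_pos hηpos (by positivity)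
  set mu := min ((lam+1)/2) (lam * Real.exp t) with hmu
  have hmula : lam < mu := by
    refine lt_min (by linarith) ?_
    have h1 : Real.exp 0 < Real.exp t := Real.exp_lt_exp.mpr htpos
    rw [Real.exp_zero] at h1
    nlinarith
  have hmu1 : mu < 1 := lt_of_le_of_lt (min_le_left _ _) (by linarith)
  have hkey := key mu hmula hmu1 (η/4) (by positivity)
  have hmupos : 0 < mu := lt_trans hl0 hmula
  have hlogmu : Real.log mu ≤ Real.log lam + t := by
    have hle : mu ≤ lam * Real.exp t := min_le_right _ _
    calc Real.log mu ≤ Real.log (lam * Real.exp t) := Real.log_le_log hmupos hle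
      _ = Real.log lam + t := by
          rw [Real.log_mul (ne_of_gt hl0) (Real.exp_ne_zero t), Real.log_exp]
  have h5 : d * Real.log lam⁻¹ - d * t ≤ d * Real.log mu⁻¹ := by
    rw [Real.log_inv, Real.log_inv]
    nlinarith
  have h6 : d * t ≤ η / 4 := by
    rw [ht]
    have he : d * (η / (4*(d+1))) = (d/(d+1)) * (η/4) := by
      have hne : d + 1 ≠ 0 := by positivity
      field_simp
    rw [he]
    have hd1 : d/(d+1) ≤ 1 := by
      rw [div_le_one (by positivity)]
      linarith
    have := mul_le_mul_of_nonneg_right hd1 (by positivity : (0:ℝ) ≤ η/4)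
    linarith
  linarith
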